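/- Let R be a ring. Then R is a right Σ-V ring if and only if every right ideal I of R is idempotent (I² = I) and every right primitive factor ring of R is a right Σ-V ring. -/

import Mathlib

universe u

open MulOpposite

/-- A right `A`-module `M` is Σ-injective if the direct sum of any family of copies of `M`
is injective. -/
def IsSigmaInjective (A : Type u) [Ring A] (M : Type u) [AddCommGroup M] [Module A M] : Prop :=
  ∀ ι : Type u, Module.Injective A (ι →₀ M)

/-- `R` is a right Σ-V ring: every simple right `R`-module is Σ-injective.
Right `R`-modules are modules over `Rᵐᵒᵖ`. -/
def IsRightSigmaVRing (R : Type u) [Ring R] : Prop :=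
  ∀ (S : Type u) [AddCommGroup S] [Module Rᵐᵒᵖ S],
    IsSimpleModule Rᵐᵒᵖ S → IsSigmaInjective Rᵐᵒᵖ S

/-- `R` is right primitive: it has a faithful simple right module. -/
def IsRightPrimitiveRing (R : Type u) [Ring R] : Prop :=
  ∃ S : ModuleCat.{u} Rᵐᵒᵖ, IsSimpleModule Rᵐᵒᵖ S ∧ FaithfulSMul Rᵐᵒᵖ S

section Transfer

variable {A B : Type u} [Ring A] [Ring B] {M : Type u} [AddCommGroup M]

def submoduleOrderIso (π : A →+* B) (hπ : Function.Surjective π)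
    [Module A M] [Module B M] (hc : ∀ (a : A) (m : M), a • m = π a • m) :
    Submodule B M ≃o Submodule A M where
  toFun N :=
    { carrier := N
      add_mem' := fun h1 h2 => N.add_mem h1 h2
      zero_mem' := N.zero_mem
      smul_mem' := fun a m hm => by
        show a • m ∈ (N : Set M)
        rw [hc]
        exact N.smul_mem (π a) hm }
  invFun N :=
    { carrier := N
      add_mem' := fun h1 h2 => N.add_mem h1 h2
      zero_mem' := N.zero_mem
      smul_mem' := fun b m hm => by
        obtain ⟨a, rfl⟩ := hπ b
        show π a • m ∈ (N : Set M)
        rw [← hc]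
        exact N.smul_mem a hm }
  left_inv N := SetLike.coe_injective rfl
  right_inv N := SetLike.coe_injective rfl
  map_rel_iff' := Iff.rfl

theorem isSimpleModule_transfer (π : A →+* B) (hπ : Function.Surjective π)
    [Module A M] [Module B M] (hc : ∀ (a : A) (m : M), a • m = π a • m) :
    IsSimpleModule B M ↔ IsSimpleModule A M :=
  by rw [isSimpleModule_iff, isSimpleModule_iff]; exact (submoduleOrderIso π hπ hc).isSimpleOrder_iff

theorem injective_transfer (π : A →+* B) (hπ : Function.Surjective π)
    [Module A M] [Module B M] (hc : ∀ (a : A) (m : M), a • m = π a • m)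
    (h : Module.Injective A M) : Module.Injective B M := by
  constructor
  intro X Y _ _ _ _ f hf g
  letI : Module A X := Module.compHom X π
  letI : Module A Y := Module.compHom Y π
  let f' : X →ₗ[A] Y :=
    { toFun := f
      map_add' := f.map_add
      map_smul' := fun a x => by
        show f (π a • x) = π a • f x
        exact f.map_smul (π a) x }
  let g' : X →ₗ[A] M :=
    { toFun := g
      map_add' := g.map_add
      map_smul' := fun a x => by
        show g (π a • x) = a • g x
        rw [hc]
        exact g.map_smul (π a) x }
  obtain ⟨H, hH⟩ := h.out f' hf g'
  refine ⟨{ toFun := H, map_add' := H.map_add, map_smul' := ?_ }, fun x => hH x⟩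
  intro b y
  obtain ⟨a, rfl⟩ := hπ b
  show H (π a • y) = π a • H y
  rw [← hc]
  exact H.map_smul a y

end Transfer

def rOpEquiv (R : Type u) [Ring R] : R ≃ₗ[Rᵐᵒᵖ] Rᵐᵒᵖ where
  toFun := op
  invFun := unop
  left_inv _ := rfl
  right_inv _ := rfl
  map_add' _ _ := rfl
  map_smul' _ _ := rfl

def lmulA {R : Type u} [Ring R] (b : R) : R →ₗ[Rᵐᵒᵖ] R where
  toFun x := b * x
  map_add' := mul_add b
  map_smul' a x := by
    show b * (x * unop a) = (b * x) * unop a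
    rw [mul_assoc]


theorem idempotent_of_sigmaV {R : Type u} [Ring R] (hV : IsRightSigmaVRing R)
    (I : Submodule Rᵐᵒᵖ R) :
    Submodule.span Rᵐᵒᵖ {x : R | ∃ a ∈ I, ∃ b ∈ I, x = a * b} = I := by
  set I2 := Submodule.span Rᵐᵒᵖ {x : R | ∃ a ∈ I, ∃ b ∈ I, x = a * b} with hI2
  apply le_antisymm
  · rw [Submodule.span_le]
    rintro x ⟨a, ha, b, hb, rfl⟩
    have : op b • a ∈ I := I.smul_mem _ ha
    simpa [MulOpposite.smul_eq_mul_unop] using this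
  · intro b hb
    by_contra hbn
    set K : Submodule Rᵐᵒᵖ R := Submodule.comap (lmulA b) I2 with hK
    have hK1 : (1 : R) ∉ K := by
      intro h
      exact hbn (by simpa [hK, lmulA] using h)
    set eo : Submodule Rᵐᵒᵖ R ≃o Ideal Rᵐᵒᵖ := Submodule.orderIsoMapComap (rOpEquiv R) with heo
    have hKT : eo K ≠ ⊤ := by
      intro h
      have : K = ⊤ := by
        have := congrArg eo.symm h
        rwa [eo.symm_apply_apply, map_top] at this
      exact hK1 (this ▸ Submodule.mem_top)
    obtain ⟨J, hJmax, hKJ⟩ := Ideal.exists_le_maximal _ hKT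
    set M : Submodule Rᵐᵒᵖ R := eo.symm J with hM
    have hKM : K ≤ M := by
      rw [← eo.symm_apply_apply K]
      exact eo.symm.monotone hKJ
    have hMco : IsCoatom M := (OrderIso.isCoatom_iff eo.symm J).mpr (Ideal.isMaximal_def.mp hJmax)
    haveI hsimple : IsSimpleModule Rᵐᵒᵖ (R ⧸ M) := isSimpleModule_iff_isCoatom.mpr hMco
    have hinj : Module.Injective Rᵐᵒᵖ (PUnit.{u + 1} →₀ (R ⧸ M)) := hV _ hsimple PUnit
    set f1 : (R ⧸ LinearMap.ker (lmulA b)) →ₗ[Rᵐᵒᵖ] R :=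
      Submodule.liftQ _ (lmulA b) le_rfl with hf1def
    have hf1 : Function.Injective f1 := by
      rw [← LinearMap.ker_eq_bot, hf1def, Submodule.ker_liftQ_eq_bot _ _ _ le_rfl]
    set g0 : R →ₗ[Rᵐᵒᵖ] (PUnit.{u + 1} →₀ (R ⧸ M)) :=
      (Finsupp.lsingle PUnit.unit).comp (Submodule.mkQ M) with hg0
    have hker : LinearMap.ker (lmulA b) ≤ LinearMap.ker g0 := by
      intro x hx
      have hx0 : b * x = 0 := hx
      have hxK : x ∈ K := by
        show b * x ∈ I2
        rw [hx0]
        exact I2.zero_mem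
      have hxM : x ∈ M := hKM hxK
      simp [hg0, LinearMap.mem_ker, Submodule.Quotient.mk_eq_zero, hxM]
    set g1 := Submodule.liftQ (LinearMap.ker (lmulA b)) g0 hker with hg1
    obtain ⟨H, hH⟩ := hinj.out f1 hf1 g1
    set h : R →ₗ[Rᵐᵒᵖ] (R ⧸ M) := (Finsupp.lapply PUnit.unit).comp H with hh
    have hb1 : h b = Submodule.Quotient.mk 1 := by
      have h1 := hH (Submodule.Quotient.mk 1)
      have hf1b : f1 (Submodule.Quotient.mk 1) = b := by
        rw [hf1def, Submodule.liftQ_apply]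
        show b * 1 = b
        rw [mul_one]
      have hg1b : g1 (Submodule.Quotient.mk 1) = g0 1 := by
        rw [hg1, Submodule.liftQ_apply]
      rw [hf1b, hg1b] at h1
      rw [hh]
      show (Finsupp.lapply PUnit.unit : (PUnit.{u + 1} →₀ R ⧸ M) →ₗ[Rᵐᵒᵖ] R ⧸ M) (H b) = (Submodule.Quotient.mk 1 : R ⧸ M)
      rw [h1, hg0]
      simp
    obtain ⟨c, hc⟩ := Submodule.Quotient.mk_surjective M (h 1)
    have hb2 : h b = Submodule.Quotient.mk (c * b) := by
      have hb' : h b = op b • h 1 := by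
        conv_lhs => rw [show (b : R) = op b • (1 : R) by simp [MulOpposite.smul_eq_mul_unop]]
        rw [map_smul]
      rw [hb', ← hc, ← Submodule.Quotient.mk_smul]
      rfl
    have hmem : (1 : R) - c * b ∈ M := by
      rw [← Submodule.Quotient.eq, ← hb1, hb2]
    have hcbK : c * b ∈ K := by
      show b * (c * b) ∈ I2
      rw [← mul_assoc]
      have hbc : b * c ∈ I := by
        have : op c • b ∈ I := I.smul_mem _ hb
        simpa [MulOpposite.smul_eq_mul_unop] using this
      exact Submodule.subset_span ⟨b * c, hbc, b, hb, rfl⟩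
    have h1M : (1 : R) ∈ M := by
      have := M.add_mem hmem (hKM hcbK)
      simpa using this
    apply hMco.1
    rw [eq_top_iff]
    intro x _
    have : op x • (1 : R) ∈ M := M.smul_mem _ h1M
    simpa [MulOpposite.smul_eq_mul_unop] using this

theorem sigmaV_of_surjective {R T : Type u} [Ring R] [Ring T] (hV : IsRightSigmaVRing R)
    (f : R →+* T) (hf : Function.Surjective f) : IsRightSigmaVRing T := by
  intro S _ instS hS ι
  set π : Rᵐᵒᵖ →+* Tᵐᵒᵖ := RingHom.op f with hπ
  have hπs : Function.Surjective π := by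
    intro t
    obtain ⟨r, hr⟩ := hf (unop t)
    exact ⟨op r, by simp [hπ, hr]⟩
  letI : Module Rᵐᵒᵖ S := Module.compHom S π
  have hc : ∀ (a : Rᵐᵒᵖ) (m : S), a • m = π a • m := fun a m => rfl
  haveI hSA : IsSimpleModule Rᵐᵒᵖ S := (isSimpleModule_transfer π hπs hc).mp hS
  have hinjA : Module.Injective Rᵐᵒᵖ (ι →₀ S) := hV S hSA ι
  exact injective_transfer π hπs (fun a v => by ext i; rfl) hinjA

theorem ideal_le_span_products {R : Type u} [Ring R]
    (hid : ∀ I : Submodule Rᵐᵒᵖ R,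
      Submodule.span Rᵐᵒᵖ {x : R | ∃ a ∈ I, ∃ b ∈ I, x = a * b} = I)
    (W : Ideal Rᵐᵒᵖ) :
    W ≤ Submodule.span Rᵐᵒᵖ {y : Rᵐᵒᵖ | ∃ u ∈ W, ∃ v ∈ W, y = u * v} := by
  intro x hx
  set e := rOpEquiv R
  set I : Submodule Rᵐᵒᵖ R := Submodule.map (e.symm : Rᵐᵒᵖ →ₗ[Rᵐᵒᵖ] R) W with hI
  have hxI : unop x ∈ I := ⟨x, hx, rfl⟩
  rw [← hid I] at hxI
  have hmem : x ∈ Submodule.map (e : R →ₗ[Rᵐᵒᵖ] Rᵐᵒᵖ)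
      (Submodule.span Rᵐᵒᵖ {x : R | ∃ a ∈ I, ∃ b ∈ I, x = a * b}) := ⟨unop x, hxI, op_unop x⟩
  rw [Submodule.map_span] at hmem
  refine Submodule.span_mono ?_ hmem
  rintro y ⟨z, ⟨a, ha, b, hb, rfl⟩, rfl⟩
  obtain ⟨α, hα, rfl⟩ := ha
  obtain ⟨β, hβ, rfl⟩ := hb
  exact ⟨β, hβ, α, hα, (op_mul _ _)⟩


section Backward

variable {R : Type u} [Ring R] (S : Type u) [AddCommGroup S] [Module Rᵐᵒᵖ S]

/-- The ring congruence on `R` identifying elements acting equally on the right module `S`. -/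
def annCon : RingCon R where
  r a b := ∀ m : S, op a • m = op b • m
  iseqv := ⟨fun _ _ => rfl, fun h m => (h m).symm, fun h1 h2 m => (h1 m).trans (h2 m)⟩
  mul' := fun {w x y z} h1 h2 m => by
    show op (w * y) • m = op (x * z) • m
    rw [op_mul, op_mul, mul_smul, mul_smul, h1 m, h2 (op x • m)]
  add' := fun {w x y z} h1 h2 m => by
    show op (w + y) • m = op (x + z) • m
    rw [op_add, op_add, add_smul, add_smul, h1 m, h2 m]

theorem backward_main {R : Type u} [Ring R]
    (hid : ∀ I : Submodule Rᵐᵒᵖ R,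
      Submodule.span Rᵐᵒᵖ {x : R | ∃ a ∈ I, ∃ b ∈ I, x = a * b} = I)
    (hfac : ∀ (T : Type u) [Ring T] (f : R →+* T), Function.Surjective f →
      IsRightPrimitiveRing T → IsRightSigmaVRing T) :
    IsRightSigmaVRing R := by
  intro S _ _ hS ι
  set c : RingCon R := annCon S with hcdef
  set T := c.Quotient with hT
  set π : Rᵐᵒᵖ →+* Tᵐᵒᵖ := RingHom.op c.mk' with hπdef
  have hπs : Function.Surjective π := by
    intro t
    obtain ⟨r, hr⟩ : ∃ r : R, (r : c.Quotient) = unop t := Quotient.exists_rep (unop t)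
    exact ⟨op r, unop_injective hr⟩
  letI : SMul Tᵐᵒᵖ S :=
    ⟨fun t m => Quotient.liftOn (unop t) (fun r => op r • m) (fun r s h => h m)⟩
  have hsmul : ∀ (a : Rᵐᵒᵖ) (m : S), π a • m = a • m := fun a m => rfl
  letI : Module Tᵐᵒᵖ S := Function.Surjective.moduleLeft π hπs hsmul
  haveI hsimpleT : IsSimpleModule Tᵐᵒᵖ S :=
    (isSimpleModule_transfer π hπs (fun a m => (hsmul a m).symm)).mpr hS
  haveI hfaith : FaithfulSMul Tᵐᵒᵖ S := by
    constructor
    intro t1 t2 h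
    obtain ⟨r, hr⟩ : ∃ r : R, (r : c.Quotient) = unop t1 := Quotient.exists_rep (unop t1)
    obtain ⟨s, hs⟩ : ∃ s : R, (s : c.Quotient) = unop t2 := Quotient.exists_rep (unop t2)
    have ht1 : t1 = op ((r : c.Quotient)) := by rw [hr, op_unop]
    have ht2 : t2 = op ((s : c.Quotient)) := by rw [hs, op_unop]
    have hcrs : c r s := by
      intro m
      have hm := h m
      rw [ht1, ht2] at hm
      exact hm
    rw [ht1, ht2]
    exact congrArg op (c.eq.mpr hcrs)
  have hprim : IsRightPrimitiveRing T := ⟨ModuleCat.of Tᵐᵒᵖ S, hsimpleT, hfaith⟩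
  have hTV : IsRightSigmaVRing T := hfac T c.mk' (fun t => Quotient.exists_rep t) hprim
  have hinjB : Module.Injective Tᵐᵒᵖ (ι →₀ S) := hTV S hsimpleT ι
  -- compatibility on the direct sum
  have hcQ : ∀ (a : Rᵐᵒᵖ) (v : ι →₀ S), a • v = π a • v := by
    intro a v
    ext i
    rfl
  -- Baer's criterion over Rᵐᵒᵖ
  refine Module.Baer.injective ?_
  intro J g
  set P : Ideal Rᵐᵒᵖ := RingHom.ker π with hP
  have hPann : ∀ a ∈ P, ∀ v : ι →₀ S, a • v = 0 := by
    intro a ha v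
    have h0 : π a = 0 := ha
    rw [hcQ a v, h0, zero_smul]
  -- g vanishes on J ⊓ P
  have hWk : (J ⊓ P : Ideal Rᵐᵒᵖ) ≤ Submodule.map J.subtype (LinearMap.ker g) := by
    refine le_trans (ideal_le_span_products hid (J ⊓ P)) (Submodule.span_le.mpr ?_)
    rintro y ⟨u, hu, v, hv, rfl⟩
    have huvJ : u * v ∈ J := J.mul_mem_left u hv.1
    refine ⟨⟨u * v, huvJ⟩, ?_, rfl⟩
    have heq : (⟨u * v, huvJ⟩ : J) = u • ⟨v, hv.1⟩ := Subtype.ext (by simp)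
    show g ⟨u * v, huvJ⟩ = 0
    rw [heq, map_smul]
    exact hPann u hu.2 _
  have hgW : ∀ x (hxJ : x ∈ J), x ∈ P → g ⟨x, hxJ⟩ = 0 := by
    intro x hxJ hxP
    obtain ⟨y, hy, hyx⟩ := hWk ⟨hxJ, hxP⟩
    have : y = ⟨x, hxJ⟩ := Subtype.ext hyx
    rw [← this]
    exact hy
  have hsame : ∀ x y (hx : x ∈ J) (hy : y ∈ J), π x = π y → g ⟨x, hx⟩ = g ⟨y, hy⟩ := by
    intro x y hx hy hxy
    have hsub : x - y ∈ J := J.sub_mem hx hy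
    have hsubP : x - y ∈ P := by
      show π (x - y) = 0
      rw [map_sub, hxy, sub_self]
    have h0 : g ⟨x - y, hsub⟩ = 0 := hgW _ hsub hsubP
    have : (⟨x - y, hsub⟩ : J) = ⟨x, hx⟩ - ⟨y, hy⟩ := Subtype.ext rfl
    rw [this, map_sub, sub_eq_zero] at h0
    exact h0
  set JB : Ideal Tᵐᵒᵖ := Ideal.map π J with hJB
  have hmemJB : ∀ y : JB, ∃ x, x ∈ J ∧ π x = (y : Tᵐᵒᵖ) := fun y =>
    (Ideal.mem_map_iff_of_surjective π hπs).mp y.2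
  classical
  set gb : JB →ₗ[Tᵐᵒᵖ] (ι →₀ S) :=
    { toFun := fun y => g ⟨(hmemJB y).choose, (hmemJB y).choose_spec.1⟩
      map_add' := by
        intro y z
        have h1 := (hmemJB y).choose_spec
        have h2 := (hmemJB z).choose_spec
        have h3 := (hmemJB (y + z)).choose_spec
        have : g ⟨(hmemJB (y + z)).choose, h3.1⟩
            = g ⟨(hmemJB y).choose + (hmemJB z).choose, J.add_mem h1.1 h2.1⟩ := by
          refine hsame _ _ _ _ ?_
          rw [map_add, h1.2, h2.2, h3.2]
          rfl
        rw [this]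
        have : (⟨(hmemJB y).choose + (hmemJB z).choose, J.add_mem h1.1 h2.1⟩ : J)
            = ⟨(hmemJB y).choose, h1.1⟩ + ⟨(hmemJB z).choose, h2.1⟩ := Subtype.ext rfl
        rw [this, map_add]
      map_smul' := by
        intro b y
        obtain ⟨a, rfl⟩ := hπs b
        have h1 := (hmemJB y).choose_spec
        have h3 := (hmemJB (π a • y)).choose_spec
        have haJ : a * (hmemJB y).choose ∈ J := J.mul_mem_left a h1.1
        have : g ⟨(hmemJB (π a • y)).choose, h3.1⟩ = g ⟨a * (hmemJB y).choose, haJ⟩ := by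
          refine hsame _ _ _ _ ?_
          rw [map_mul, h1.2, h3.2]
          rfl
        rw [this]
        have heq : (⟨a * (hmemJB y).choose, haJ⟩ : J) = a • ⟨(hmemJB y).choose, h1.1⟩ :=
          Subtype.ext rfl
        rw [heq, map_smul, hcQ]
        rfl }
  obtain ⟨h, hh⟩ := hinjB.out JB.subtype (fun x y hxy => Subtype.ext hxy) gb
  refine ⟨{ toFun := fun a => h (π a)
            map_add' := fun a b => by rw [map_add, map_add]
            map_smul' := fun a' a => by
              rw [smul_eq_mul, map_mul, ← smul_eq_mul (α := Tᵐᵒᵖ), map_smul, ← hcQ]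
              rfl }, ?_⟩
  intro x hx
  have hxJB : π x ∈ JB := Ideal.mem_map_of_mem π hx
  have h1 : h (π x) = gb ⟨π x, hxJB⟩ := hh ⟨π x, hxJB⟩
  show h (π x) = g ⟨x, hx⟩
  rw [h1]
  exact hsame _ _ _ _ (hmemJB ⟨π x, hxJB⟩).choose_spec.2

end Backward

/-- A ring `R` is a right Σ-V ring if and only if every right ideal `I` of `R` is
idempotent (`I² = I`) and every right primitive factor ring of `R` is a right Σ-V ring. -/
theorem rightSigmaV_iff_idempotent_ideals_and_primitive_factors
    (R : Type u) [Ring R] :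
    IsRightSigmaVRing R ↔
      ((∀ I : Submodule Rᵐᵒᵖ R,
          Submodule.span Rᵐᵒᵖ {x : R | ∃ a ∈ I, ∃ b ∈ I, x = a * b} = I) ∧
        ∀ (T : Type u) [Ring T] (f : R →+* T), Function.Surjective f →
          IsRightPrimitiveRing T → IsRightSigmaVRing T) := by
  constructor
  · intro hV
    exact ⟨fun I => idempotent_of_sigmaV hV I,
      fun T _ f hf _ => sigmaV_of_surjective hV f hf⟩
  · rintro ⟨hid, hfac⟩
    exact backward_main hid hfac
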